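/- Let φ : [0,2] × ℝ → ℝ be continuous with φ_c(0) > 0 for all c ∈ [0,2] and φ_2^n(0) < 0 for all n ≥ 2, and set Φ_n(c) = φ_c^n(0). Suppose n ≥ 5 and 2 ≤ i ≤ n-2, Φ_{n-1}(c₁) = 0 with c₁ ∈ [0,2), Φ_{n-i}(c₂) = 0 with c₂ ∈ [0,2), and c₂ is strictly larger than every solution of Φ_i(c) = 0 in [0,2]. Then Φ_n(c) = 0 has a solution strictly between c₁ and c₂ (assuming c₁ ≠ c₂). -/

import Mathlib

theorem zero_between
    (φ : ℝ → ℝ → ℝ)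
    (hcont : ContinuousOn (fun p : ℝ × ℝ => φ p.1 p.2) (Set.Icc 0 2 ×ˢ Set.univ))
    (hpos : ∀ c ∈ Set.Icc (0:ℝ) 2, φ c 0 > 0)
    (hneg : ∀ n : ℕ, 2 ≤ n → (φ 2)^[n] 0 < 0)
    (n i : ℕ) (hn : 5 ≤ n) (hi1 : 2 ≤ i) (hi2 : i ≤ n - 2)
    (c₁ c₂ : ℝ) (hc₁ : c₁ ∈ Set.Ico (0:ℝ) 2) (hc₂ : c₂ ∈ Set.Ico (0:ℝ) 2)
    (hz₁ : (φ c₁)^[n-1] 0 = 0) (hz₂ : (φ c₂)^[n-i] 0 = 0)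
    (hmax : ∀ c ∈ Set.Icc (0:ℝ) 2, (φ c)^[i] 0 = 0 → c < c₂)
    (hne : c₁ ≠ c₂) :
    ∃ c ∈ Set.Ioo (min c₁ c₂) (max c₁ c₂), (φ c)^[n] 0 = 0 := by
  -- continuity of c ↦ (φ c)^[k] 0 on [0,2]
  have hcontk : ∀ k : ℕ, ContinuousOn (fun c => (φ c)^[k] 0) (Set.Icc (0:ℝ) 2) := by
    intro k
    induction k with
    | zero => simpa using continuousOn_const
    | succ k ih =>
      have : ContinuousOn (fun c => φ c ((φ c)^[k] 0)) (Set.Icc (0:ℝ) 2) := by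
        apply hcont.comp (continuousOn_id.prodMk ih)
        intro c hc
        exact ⟨hc, Set.mem_univ _⟩
      simpa [Function.iterate_succ_apply'] using this
  have hc₁' : c₁ ∈ Set.Icc (0:ℝ) 2 := ⟨hc₁.1, hc₁.2.le⟩
  have hc₂' : c₂ ∈ Set.Icc (0:ℝ) 2 := ⟨hc₂.1, hc₂.2.le⟩
  -- Φ_n(c₁) > 0
  have hn1 : 1 + (n - 1) = n := by omega
  have hpos₁ : (φ c₁)^[n] 0 > 0 := by
    have : (φ c₁)^[n] 0 = (φ c₁)^[1] ((φ c₁)^[n-1] 0) := by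
      rw [← Function.iterate_add_apply, hn1]
    rw [this, hz₁]
    simpa using hpos c₁ hc₁'
  -- Φ_n(c₂) = Φ_i(c₂)
  have hni : i + (n - i) = n := by omega
  have heq₂ : (φ c₂)^[n] 0 = (φ c₂)^[i] 0 := by
    conv_lhs => rw [← hni, Function.iterate_add_apply, hz₂]
  -- Φ_i(c₂) < 0
  have hneg₂i : (φ c₂)^[i] 0 < 0 := by
    by_contra h
    push_neg at h
    rcases eq_or_lt_of_le h with heq | hlt
    · exact lt_irrefl c₂ (hmax c₂ hc₂' heq.symm)
    · -- Φ_i(c₂) > 0 and Φ_i(2) < 0: zero in (c₂, 2)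
      have h2 : (φ 2)^[i] 0 < 0 := hneg i hi1
      have hsub : Set.Icc c₂ 2 ⊆ Set.Icc (0:ℝ) 2 :=
        Set.Icc_subset_Icc hc₂.1 le_rfl
      have := intermediate_value_Ioo' hc₂.2.le ((hcontk i).mono hsub)
      have hmem : (0:ℝ) ∈ Set.Ioo ((φ 2)^[i] 0) ((φ c₂)^[i] 0) := ⟨h2, hlt⟩
      obtain ⟨c, hcmem, hcz⟩ := this hmem
      have := hmax c ⟨le_trans hc₂.1 hcmem.1.le, hcmem.2.le⟩ hcz
      exact absurd this (not_lt.mpr hcmem.1.le)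
  have hneg₂ : (φ c₂)^[n] 0 < 0 := heq₂ ▸ hneg₂i
  rcases lt_or_gt_of_ne hne with hlt | hgt
  · rw [min_eq_left hlt.le, max_eq_right hlt.le]
    have hsub : Set.Icc c₁ c₂ ⊆ Set.Icc (0:ℝ) 2 := Set.Icc_subset_Icc hc₁.1 hc₂.2.le
    have := intermediate_value_Ioo' hlt.le ((hcontk n).mono hsub)
    obtain ⟨c, hcmem, hcz⟩ := this ⟨hneg₂, hpos₁⟩
    exact ⟨c, hcmem, hcz⟩
  · rw [min_eq_right hgt.le, max_eq_left hgt.le]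
    have hsub : Set.Icc c₂ c₁ ⊆ Set.Icc (0:ℝ) 2 := Set.Icc_subset_Icc hc₂.1 hc₁.2.le
    have := intermediate_value_Ioo hgt.le ((hcontk n).mono hsub)
    obtain ⟨c, hcmem, hcz⟩ := this ⟨hneg₂, hpos₁⟩
    exact ⟨c, hcmem, hcz⟩
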